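/- Let 𝕜 be an RCLike field (ℝ or ℂ) and let y, z be submodules of EuclideanSpace 𝕜 (Fin 2) forming a pairwise generic pair, i.e. y, z ∉ {⊥, ⊤}, y ⊓ z = ⊥, y ⊓ zᗮ = ⊥, and yᗮ ⊓ zᗮ = ⊥. Then for every submodule X of EuclideanSpace 𝕜 (Fin 2): if X = ⊥ then (C(X,y) ⊓ C(X,z) ⊓ Xᗮ)ᗮ = ⊥, and if X ≠ ⊥ then (C(X,y) ⊓ C(X,z) ⊓ Xᗮ)ᗮ = ⊤. -/

import Mathlib

/-- The (lower) qlCommutator `C(X,Y)` of two subspaces of an inner product space. -/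
noncomputable def qlCommutator {𝕜 E : Type*} [RCLike 𝕜] [NormedAddCommGroup E]
    [InnerProductSpace 𝕜 E] (X Y : Submodule 𝕜 E) : Submodule 𝕜 E :=
  (X ⊓ Y) ⊔ (X ⊓ Yᗮ) ⊔ (Xᗮ ⊓ Y) ⊔ (Xᗮ ⊓ Yᗮ)

lemma finrank_one_of_line {𝕜 : Type*} [RCLike 𝕜]
    (A : Submodule 𝕜 (EuclideanSpace 𝕜 (Fin 2))) (hA : A ≠ ⊥) (hA' : A ≠ ⊤) :
    Module.finrank 𝕜 A = 1 := by
  have h2 : Module.finrank 𝕜 (EuclideanSpace 𝕜 (Fin 2)) = 2 := finrank_euclideanSpace_fin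
  have hlt : Module.finrank 𝕜 A < 2 := by
    have := Submodule.finrank_lt hA'
    rwa [h2] at this
  have hpos : 0 < Module.finrank 𝕜 A := by
    rcases Nat.eq_zero_or_pos (Module.finrank 𝕜 A) with h | h
    · exact absurd (Submodule.finrank_eq_zero.mp h) hA
    · exact h
  omega

lemma line_meet {𝕜 : Type*} [RCLike 𝕜]
    (A B : Submodule 𝕜 (EuclideanSpace 𝕜 (Fin 2)))
    (hA : A ≠ ⊥) (hA' : A ≠ ⊤) (hB : B ≠ ⊥) (hB' : B ≠ ⊤) (hAB : A ≠ B) :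
    A ⊓ B = ⊥ := by
  by_contra h
  have hpos : 0 < Module.finrank 𝕜 (A ⊓ B : Submodule 𝕜 _) := by
    rcases Nat.eq_zero_or_pos (Module.finrank 𝕜 (A ⊓ B : Submodule 𝕜 _)) with h' | h'
    · exact absurd (Submodule.finrank_eq_zero.mp h') h
    · exact h'
  have hA1 := finrank_one_of_line A hA hA'
  have hB1 := finrank_one_of_line B hB hB'
  have e1 : A ⊓ B = A :=
    Submodule.eq_of_le_of_finrank_le inf_le_left (by omega)
  have e2 : A ⊓ B = B :=
    Submodule.eq_of_le_of_finrank_le inf_le_right (by omega)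
  exact hAB (e1 ▸ e2)

theorem indiscrete_quantifier_2D {𝕜 : Type*} [RCLike 𝕜]
    (y z : Submodule 𝕜 (EuclideanSpace 𝕜 (Fin 2)))
    (hy : y ≠ ⊥) (hy' : y ≠ ⊤) (hz : z ≠ ⊥) (hz' : z ≠ ⊤)
    (h1 : y ⊓ z = ⊥) (h2 : y ⊓ zᗮ = ⊥) (h3 : yᗮ ⊓ zᗮ = ⊥)
    (X : Submodule 𝕜 (EuclideanSpace 𝕜 (Fin 2))) :
    (X = ⊥ → (qlCommutator X y ⊓ qlCommutator X z ⊓ Xᗮ)ᗮ = ⊥) ∧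
    (X ≠ ⊥ → (qlCommutator X y ⊓ qlCommutator X z ⊓ Xᗮ)ᗮ = ⊤) := by
  have hyo : yᗮ ≠ ⊥ := fun h => hy' (Submodule.orthogonal_eq_bot_iff.mp h)
  have hyo' : yᗮ ≠ ⊤ := fun h => hy ((Submodule.orthogonal_eq_top_iff _).mp h)
  have hzo : zᗮ ≠ ⊥ := fun h => hz' (Submodule.orthogonal_eq_bot_iff.mp h)
  have hzo' : zᗮ ≠ ⊤ := fun h => hz ((Submodule.orthogonal_eq_top_iff _).mp h)
  have hyz : y ≠ z := fun h => hz (by rw [← h1, h, inf_idem])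
  have hyzo : y ≠ zᗮ := fun h => hy (by rw [← h2, ← h, inf_idem])
  have hyozo : yᗮ ≠ zᗮ := fun h => hyo (by rw [← h3, h, inf_idem])
  have hyoz : yᗮ ≠ z := fun h => by
    apply hy
    rw [← h2, ← h, Submodule.orthogonal_orthogonal, inf_idem]
  constructor
  · rintro rfl
    have h : qlCommutator (⊥ : Submodule 𝕜 (EuclideanSpace 𝕜 (Fin 2))) y ⊓
        qlCommutator ⊥ z ⊓ (⊥ : Submodule 𝕜 (EuclideanSpace 𝕜 (Fin 2)))ᗮ = ⊤ := by
      simp [qlCommutator, Submodule.bot_orthogonal_eq_top,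
        Submodule.sup_orthogonal_of_hasOrthogonalProjection]
    rw [h, Submodule.top_orthogonal_eq_bot]
  · intro hX
    rw [Submodule.orthogonal_eq_top_iff]
    by_cases hX' : X = ⊤
    · subst hX'
      simp [Submodule.top_orthogonal_eq_bot]
    · -- X is a line
      by_cases hXy : X = y
      · have : qlCommutator X z = ⊥ := by
          rw [hXy, qlCommutator, h1, h2, line_meet yᗮ z hyo hyo' hz hz' hyoz, h3]
          simp
        rw [this]
        simp
      · by_cases hXyo : X = yᗮ
        · have : qlCommutator X z = ⊥ := by
            rw [hXyo, qlCommutator, Submodule.orthogonal_orthogonal,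
              line_meet yᗮ z hyo hyo' hz hz' hyoz, h3, h1, h2]
            simp
          rw [this]
          simp
        · have : qlCommutator X y = ⊥ := by
            have hXo : Xᗮ ≠ ⊥ := fun h => hX' (Submodule.orthogonal_eq_bot_iff.mp h)
            have hXo' : Xᗮ ≠ ⊤ := fun h => hX ((Submodule.orthogonal_eq_top_iff _).mp h)
            have hXoy : Xᗮ ≠ y := fun h => hXyo (by
              have := congrArg Submodule.orthogonal h
              rwa [Submodule.orthogonal_orthogonal] at this)
            have hXoyo : Xᗮ ≠ yᗮ := fun h => hXy (by
              have := congrArg Submodule.orthogonal h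
              rwa [Submodule.orthogonal_orthogonal, Submodule.orthogonal_orthogonal] at this)
            rw [qlCommutator, line_meet X y hX hX' hy hy' hXy,
              line_meet X yᗮ hX hX' hyo hyo' hXyo,
              line_meet Xᗮ y hXo hXo' hy hy' hXoy,
              line_meet Xᗮ yᗮ hXo hXo' hyo hyo' hXoyo]
            simp
          rw [this]
          simp
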